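/- arXiv:1911.06462 — 2 statements merged into one kernel-verified Lean document; each statement's English description precedes it below -/
import Mathlib

section
/- Let 0 < α < 1/6, S > 0, and B, b, g be nonnegative reals with B < α·S, b + g ≤ (2α/(1+3α))·S, and b < (2α/(1+3α))·S. Then (B + b)/(S + b - g) < 3α. -/
theorem bad_fraction_lt_three_alpha (α S B b g : ℝ)
    (hα0 : 0 < α) (hα : α < 1 / 6) (hS : 0 < S)
    (hB0 : 0 ≤ B) (hb0 : 0 ≤ b) (hg0 : 0 ≤ g)
    (hB : B < α * S)
    (hbg : b + g ≤ (2 * α / (1 + 3 * α)) * S)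
    (hb : b < (2 * α / (1 + 3 * α)) * S) :
    (B + b) / (S + b - g) < 3 * α := by
  have h1 : (0:ℝ) < 1 + 3 * α := by linarith
  have key : 2 * α / (1 + 3 * α) * S * (1 + 3 * α) = 2 * α * S := by field_simp
  have hbg' : (b + g) * (1 + 3 * α) ≤ 2 * α * S := by
    have := mul_le_mul_of_nonneg_right hbg h1.le
    linarith [key ▸ this]
  have hden : 0 < S + b - g := by nlinarith [mul_pos hα0 hS]
  rw [div_lt_iff₀ hden]
  nlinarith [mul_pos hα0 hS, mul_nonneg hb0 hα0.le, mul_nonneg hg0 hα0.le]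
end

section
/- Suppose for each i in a finite index set I we have A_i·ℓ_i ≤ C·S_i with S_i/11 ≤ (d_i + jB_i + jG_i)·ℓ_i, where ℓ_i, A_i, S_i, d_i, jB_i, jG_i ≥ 0, the total departures satisfy sum over i of d_i·ℓ_i ≤ 2δ, and jB_i ≤ sqrt(2T_i(c·jG_i + 1)) for a constant c ≥ 1. Then sum over i of A_i·ℓ_i ≤ 11C·(2δ + sqrt(2·(sum T_i·ℓ_i)·(sum (c·jG_i+1)·ℓ_i)) + sum jG_i·ℓ_i). -/
theorem aggregated_cost_bound {ι : Type*} (s : Finset ι)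
    (A ℓ S d jB jG T : ι → ℝ) (C c δ : ℝ)
    (hC : 0 ≤ C) (hc : 1 ≤ c) (hδ : 0 ≤ δ)
    (hℓ : ∀ i ∈ s, 0 ≤ ℓ i) (hA : ∀ i ∈ s, 0 ≤ A i)
    (hS : ∀ i ∈ s, 0 ≤ S i) (hd : ∀ i ∈ s, 0 ≤ d i)
    (hjB : ∀ i ∈ s, 0 ≤ jB i) (hjG : ∀ i ∈ s, 0 ≤ jG i)
    (hT : ∀ i ∈ s, 0 ≤ T i)
    (hAi : ∀ i ∈ s, A i * ℓ i ≤ C * S i)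
    (hSi : ∀ i ∈ s, S i / 11 ≤ (d i + jB i + jG i) * ℓ i)
    (hdep : (∑ i ∈ s, d i * ℓ i) ≤ 2 * δ)
    (hjBi : ∀ i ∈ s, jB i ≤ Real.sqrt (2 * T i * (c * jG i + 1))) :
    (∑ i ∈ s, A i * ℓ i) ≤
      11 * C * (2 * δ +
        Real.sqrt (2 * (∑ i ∈ s, T i * ℓ i) * (∑ i ∈ s, (c * jG i + 1) * ℓ i)) +
        (∑ i ∈ s, jG i * ℓ i)) := by
  have h1 : (∑ i ∈ s, A i * ℓ i) ≤ 11 * C * ∑ i ∈ s, (d i + jB i + jG i) * ℓ i := by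
    rw [Finset.mul_sum]
    refine Finset.sum_le_sum fun i hi => ?_
    calc A i * ℓ i ≤ C * S i := hAi i hi
      _ ≤ 11 * C * ((d i + jB i + jG i) * ℓ i) := by nlinarith [hSi i hi, hS i hi]
  have h2 : (∑ i ∈ s, jB i * ℓ i) ≤
      Real.sqrt (2 * (∑ i ∈ s, T i * ℓ i) * (∑ i ∈ s, (c * jG i + 1) * ℓ i)) := by
    have key : (∑ i ∈ s, jB i * ℓ i) ≤
        ∑ i ∈ s, Real.sqrt (2 * T i * ℓ i) * Real.sqrt ((c * jG i + 1) * ℓ i) := by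
      refine Finset.sum_le_sum fun i hi => ?_
      have hℓi := hℓ i hi
      have hjGi := hjG i hi
      have hTi := hT i hi
      calc jB i * ℓ i ≤ Real.sqrt (2 * T i * (c * jG i + 1)) * ℓ i :=
            mul_le_mul_of_nonneg_right (hjBi i hi) hℓi
        _ = Real.sqrt (2 * T i * ℓ i) * Real.sqrt ((c * jG i + 1) * ℓ i) := by
            rw [← Real.sqrt_mul (by nlinarith [hTi, hℓi] : (0:ℝ) ≤ 2 * T i * ℓ i)]
            rw [show 2 * T i * ℓ i * ((c * jG i + 1) * ℓ i)
                = 2 * T i * (c * jG i + 1) * (ℓ i * ℓ i) by ring,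
              Real.sqrt_mul (show (0:ℝ) ≤ 2 * T i * (c * jG i + 1) by positivity)
                (ℓ i * ℓ i),
              Real.sqrt_mul_self hℓi]
    refine key.trans ?_
    have cs := Real.sum_mul_le_sqrt_mul_sqrt s
      (fun i => Real.sqrt (2 * T i * ℓ i)) (fun i => Real.sqrt ((c * jG i + 1) * ℓ i))
    have e1 : (∑ i ∈ s, Real.sqrt (2 * T i * ℓ i) ^ 2) = 2 * ∑ i ∈ s, T i * ℓ i := by
      rw [Finset.mul_sum]
      refine Finset.sum_congr rfl fun i hi => ?_
      rw [Real.sq_sqrt (by nlinarith [hT i hi, hℓ i hi])]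
      ring
    have e2 : (∑ i ∈ s, Real.sqrt ((c * jG i + 1) * ℓ i) ^ 2)
        = ∑ i ∈ s, (c * jG i + 1) * ℓ i := by
      refine Finset.sum_congr rfl fun i hi => ?_
      rw [Real.sq_sqrt (mul_nonneg (by nlinarith [hjG i hi]) (hℓ i hi))]
    rw [e1, e2] at cs
    refine cs.trans_eq ?_
    have hTnn : 0 ≤ ∑ i ∈ s, T i * ℓ i :=
      Finset.sum_nonneg fun i hi => mul_nonneg (hT i hi) (hℓ i hi)
    rw [← Real.sqrt_mul (by linarith)]
  have hjGnn : 0 ≤ ∑ i ∈ s, jG i * ℓ i :=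
    Finset.sum_nonneg fun i hi => mul_nonneg (hjG i hi) (hℓ i hi)
  have hsq : 0 ≤ Real.sqrt (2 * (∑ i ∈ s, T i * ℓ i) * (∑ i ∈ s, (c * jG i + 1) * ℓ i)) :=
    Real.sqrt_nonneg _
  calc (∑ i ∈ s, A i * ℓ i) ≤ 11 * C * ∑ i ∈ s, (d i + jB i + jG i) * ℓ i := h1
    _ ≤ _ := by
        have expand : (∑ i ∈ s, (d i + jB i + jG i) * ℓ i)
            = (∑ i ∈ s, d i * ℓ i) + (∑ i ∈ s, jB i * ℓ i) + (∑ i ∈ s, jG i * ℓ i) := by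
          rw [← Finset.sum_add_distrib, ← Finset.sum_add_distrib]
          exact Finset.sum_congr rfl fun i _ => by ring
        rw [expand]
        have h11C : (0:ℝ) ≤ 11 * C := by linarith
        exact mul_le_mul_of_nonneg_left (by linarith) h11C
end
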